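/- arXiv:2006.14951 — 2 statements merged into one kernel-verified Lean document; each statement's English description precedes it below -/
import Mathlib

section
/- Let u : ℝⁿ → ℝᵏ be uniformly continuous with |u(x)| ≤ 1 for all x, and suppose ∫_{ℝⁿ} |u(x)|²(1 - |u(x)|²) dx < ∞. Then the set S = {x ∈ ℝⁿ : 1/4 ≤ |u(x)| ≤ 3/4} is bounded. -/
open MeasureTheory

theorem stmt0 (n k : ℕ) (hn : 2 ≤ n) (hk : 1 ≤ k)
    (u : EuclideanSpace ℝ (Fin n) → EuclideanSpace ℝ (Fin k))
    (hu : UniformContinuous u)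
    (hb : ∀ x, ‖u x‖ ≤ 1)
    (hfin : Integrable (fun x => ‖u x‖ ^ 2 * (1 - ‖u x‖ ^ 2))) :
    ∃ R₀ > (0 : ℝ),
      {x : EuclideanSpace ℝ (Fin n) | 1 / 4 ≤ ‖u x‖ ∧ ‖u x‖ ≤ 3 / 4}
        ⊆ Metric.ball 0 R₀ := by
  by_contra h
  push_neg at h
  -- uniform continuity modulus for ε = 1/8
  obtain ⟨δ, hδ, hδ'⟩ := Metric.uniformContinuous_iff.mp hu (1/8) (by norm_num)
  set T : Set (EuclideanSpace ℝ (Fin n)) :=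
    {y | (15 : ℝ)/4096 ≤ ‖u y‖ ^ 2 * (1 - ‖u y‖ ^ 2)} with hT
  have hTfin : volume T < ⊤ := hfin.measure_ge_lt_top (by norm_num)
  -- any δ-ball around a point of S lies in T
  have hball : ∀ x : EuclideanSpace ℝ (Fin n), 1/4 ≤ ‖u x‖ → ‖u x‖ ≤ 3/4 →
      Metric.ball x δ ⊆ T := by
    intro x hx1 hx2 y hy
    have hdy : dist y x < δ := Metric.mem_ball.mp hy
    have hd : dist (u y) (u x) < 1/8 := hδ' hdy
    have habs : |‖u y‖ - ‖u x‖| ≤ dist (u y) (u x) := by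
      rw [dist_eq_norm]; exact abs_norm_sub_norm_le _ _
    have h1 : (1:ℝ)/8 ≤ ‖u y‖ := by
      have := abs_le.mp (habs.trans hd.le)
      linarith [this.1]
    have h2 : ‖u y‖ ≤ 7/8 := by
      have := abs_le.mp (habs.trans hd.le)
      linarith [this.2]
    show (15 : ℝ)/4096 ≤ ‖u y‖ ^ 2 * (1 - ‖u y‖ ^ 2)
    have ha : (1:ℝ)/64 ≤ ‖u y‖^2 := by nlinarith
    have hbb : (15:ℝ)/64 ≤ 1 - ‖u y‖^2 := by nlinarith
    calc (15:ℝ)/4096 = (1/64)*(15/64) := by norm_num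
      _ ≤ ‖u y‖^2 * (1 - ‖u y‖^2) := mul_le_mul ha hbb (by norm_num) (by positivity)
  -- point selector: points of S with arbitrarily large norm
  have hsel : ∀ R : ℝ, ∃ x : EuclideanSpace ℝ (Fin n),
      (1/4 ≤ ‖u x‖ ∧ ‖u x‖ ≤ 3/4) ∧ R ≤ ‖x‖ := by
    intro R
    obtain ⟨x, hxS, hxB⟩ := Set.not_subset.mp (h (max R 1) (lt_max_of_lt_right one_pos))
    refine ⟨x, hxS, ?_⟩
    have : ¬ ‖x‖ < max R 1 := fun hc => hxB (mem_ball_zero_iff.mpr hc)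
    exact (le_max_left R 1).trans (not_lt.mp this)
  choose g hgS hgN using hsel
  -- recursive sequence with gaps 2δ in norm
  let x : ℕ → EuclideanSpace ℝ (Fin n) := fun m => Nat.rec (g 0)
    (fun _ p => g (‖p‖ + 2*δ)) m
  have hxS : ∀ m, 1/4 ≤ ‖u (x m)‖ ∧ ‖u (x m)‖ ≤ 3/4 := by
    intro m; cases m with
    | zero => exact hgS 0
    | succ m => exact hgS _
  have hstep : ∀ m, ‖x m‖ + 2*δ ≤ ‖x (m+1)‖ := fun m => hgN _
  have hgap : ∀ i j, i < j → ‖x i‖ + 2*δ ≤ ‖x j‖ := by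
    intro i j hij
    induction j with
    | zero => omega
    | succ j ih =>
      rcases Nat.lt_succ_iff_lt_or_eq.mp hij with h' | h'
      · have := hstep j
        have := ih h'
        linarith
      · subst h'; exact hstep i
  -- pairwise disjoint balls
  have hdis : Pairwise (Function.onFun Disjoint fun m => Metric.ball (x m) δ) := by
    intro i j hij
    have key : ∀ i j : ℕ, i < j → Disjoint (Metric.ball (x i) δ) (Metric.ball (x j) δ) := by
      intro i j hij
      rw [Set.disjoint_left]
      intro z hzi hzj
      have h1 : dist z (x i) < δ := Metric.mem_ball.mp hzi
      have h2 : dist z (x j) < δ := Metric.mem_ball.mp hzj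
      have h3 : dist (x i) (x j) < 2*δ := by
        calc dist (x i) (x j) ≤ dist (x i) z + dist z (x j) := dist_triangle _ _ _
        _ < δ + δ := by rw [dist_comm (x i) z]; linarith
        _ = 2*δ := by ring
      have h4 : |‖x j‖ - ‖x i‖| ≤ dist (x i) (x j) := by
        rw [dist_eq_norm, norm_sub_rev]
        exact abs_norm_sub_norm_le (x j) (x i)
      have := hgap i j hij
      have := abs_le.mp h4
      linarith [this.1, this.2]
    rcases lt_or_gt_of_ne hij with h' | h'
    · exact key i j h'
    · exact (key j i h').symm
  have hsub : (⋃ m, Metric.ball (x m) δ) ⊆ T := by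
    refine Set.iUnion_subset fun m => hball (x m) (hxS m).1 (hxS m).2
  have hmeasU : volume (⋃ m, Metric.ball (x m) δ) = ∑' m, volume (Metric.ball (x m) δ) :=
    measure_iUnion hdis fun m => measurableSet_ball
  have hconst : ∀ m, volume (Metric.ball (x m) δ) = volume (Metric.ball (0 : EuclideanSpace ℝ (Fin n)) δ) :=
    fun m => Measure.addHaar_ball_center volume (x m) δ
  have hvne : volume (Metric.ball (0 : EuclideanSpace ℝ (Fin n)) δ) ≠ 0 :=
    (Metric.measure_ball_pos volume 0 hδ).ne'
  have htop : volume (⋃ m, Metric.ball (x m) δ) = ⊤ := by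
    rw [hmeasU]
    simp_rw [hconst]
    exact ENNReal.tsum_const_eq_top_of_ne_zero hvne
  have : volume T = ⊤ := top_le_iff.mp (htop ▸ measure_mono hsub)
  rw [this] at hTfin
  exact lt_irrefl _ hTfin
end

section
/- Let u : ℝⁿ → ℝᵏ be uniformly continuous with |u| ≤ 1 on ℝⁿ and 1 - |u|² ∈ L¹(ℝⁿ). Then |u(x)| → 1 as |x| → ∞. -/
open MeasureTheory Filter Metric Topology ENNReal

theorem stmt2 (n k : ℕ) (hn : 1 ≤ n) (hk : 1 ≤ k)
    (u : EuclideanSpace ℝ (Fin n) → EuclideanSpace ℝ (Fin k))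
    (hu : UniformContinuous u)
    (hb : ∀ x, ‖u x‖ ≤ 1)
    (hL1 : Integrable (fun x => 1 - ‖u x‖ ^ 2)) :
    Tendsto (fun x => ‖u x‖) (cocompact (EuclideanSpace ℝ (Fin n))) (nhds 1) := by
  obtain ⟨f, hf⟩ : ∃ f : EuclideanSpace ℝ (Fin n) → ℝ, f = fun x => 1 - ‖u x‖ ^ 2 := ⟨_, rfl⟩
  rw [show (fun x => 1 - ‖u x‖ ^ 2) = f from hf.symm] at hL1
  have hf0 : ∀ x, 0 ≤ f x := by
    intro x
    have : ‖u x‖ ^ 2 ≤ 1 := by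
      have := hb x
      nlinarith [norm_nonneg (u x)]
    rw [hf]; simp only; linarith
  have hfc : Continuous f := hf ▸ continuous_const.sub (hu.continuous.norm.pow 2)
  -- main step : f tends to 0 at cocompact
  have h2 : Tendsto f (cocompact (EuclideanSpace ℝ (Fin n))) (𝓝 0) := by
    rw [Metric.tendsto_nhds]
    intro ε hε
    obtain ⟨δ, hδ, hδ'⟩ := Metric.uniformContinuous_iff.1 hu (ε / 4) (by linarith)
    -- key estimate
    have key : ∀ x y : EuclideanSpace ℝ (Fin n), dist x y < δ → f x - ε / 2 ≤ f y := by
      intro x y hxy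
      have h1 : |‖u x‖ ^ 2 - ‖u y‖ ^ 2| ≤ 2 * dist (u x) (u y) := by
        have : ‖u x‖ ^ 2 - ‖u y‖ ^ 2 = (‖u x‖ - ‖u y‖) * (‖u x‖ + ‖u y‖) := by ring
        rw [this, abs_mul]
        have h3 : |‖u x‖ - ‖u y‖| ≤ dist (u x) (u y) := abs_norm_sub_norm_le _ _
        have h4 : |‖u x‖ + ‖u y‖| ≤ 2 := by
          rw [abs_of_nonneg (by positivity)]
          have := hb x; have := hb y; linarith
        calc |‖u x‖ - ‖u y‖| * |‖u x‖ + ‖u y‖| ≤ dist (u x) (u y) * 2 := by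
              apply mul_le_mul h3 h4 (abs_nonneg _) dist_nonneg
          _ = 2 * dist (u x) (u y) := by ring
      have h5 := hδ' hxy
      have h6 : |f x - f y| ≤ 2 * dist (u x) (u y) := by
        rw [hf]
        simp only
        have : (1 - ‖u x‖ ^ 2) - (1 - ‖u y‖ ^ 2) = -(‖u x‖ ^ 2 - ‖u y‖ ^ 2) := by ring
        rw [this, abs_neg]; exact h1
      obtain ⟨ha1, ha2⟩ := abs_le.1 h6
      linarith
    set g : EuclideanSpace ℝ (Fin n) → ℝ≥0∞ := fun x => ENNReal.ofReal (f x) with hg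
    have hgm : Measurable g := hfc.measurable.ennreal_ofReal
    set ν : Measure (EuclideanSpace ℝ (Fin n)) := volume.withDensity g with hν
    have hν_univ : ν Set.univ ≠ ⊤ := by
      have h7 : ν Set.univ = ∫⁻ x, g x := by
        rw [hν, withDensity_apply _ MeasurableSet.univ, setLIntegral_univ]
      rw [h7]
      have h8 := hL1.hasFiniteIntegral
      rw [hasFiniteIntegral_iff_ofReal (Eventually.of_forall hf0)] at h8
      exact h8.ne
    -- positive lower bound
    set c : ℝ≥0∞ := ENNReal.ofReal (ε / 2) * volume (ball (0 : EuclideanSpace ℝ (Fin n)) δ) with hc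
    have hc_pos : 0 < c := by
      apply ENNReal.mul_pos
      · simp [ENNReal.ofReal_pos]; linarith
      · exact (measure_ball_pos volume 0 hδ).ne'
    have hlow : ∀ x : EuclideanSpace ℝ (Fin n), ε ≤ f x → c ≤ ν (ball x δ) := by
      intro x hx
      have h9 : ν (ball x δ) = ∫⁻ y in ball x δ, g y :=
        withDensity_apply _ measurableSet_ball
      rw [h9, hc]
      calc ENNReal.ofReal (ε / 2) * volume (ball (0 : EuclideanSpace ℝ (Fin n)) δ)
          = ENNReal.ofReal (ε / 2) * volume (ball x δ) := by
            rw [Measure.addHaar_ball_center volume x δ]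
        _ = ∫⁻ _ in ball x δ, ENNReal.ofReal (ε / 2) := by
            rw [setLIntegral_const]
        _ ≤ ∫⁻ y in ball x δ, g y := by
            apply setLIntegral_mono hgm
            intro y hy
            apply ENNReal.ofReal_le_ofReal
            have := key x y (by rwa [mem_ball'] at hy)
            linarith
    -- far tails have small ν measure
    have htail : Tendsto (fun m : ℕ => ν (closedBall (0 : EuclideanSpace ℝ (Fin n)) m)ᶜ) atTop (𝓝 0) := by
      have hmono : Antitone (fun m : ℕ => (closedBall (0 : EuclideanSpace ℝ (Fin n)) m)ᶜ) := by
        intro a b hab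
        apply Set.compl_subset_compl.2
        exact closedBall_subset_closedBall (by exact_mod_cast hab)
      have hiInter : ⋂ m : ℕ, (closedBall (0 : EuclideanSpace ℝ (Fin n)) m)ᶜ = ∅ := by
        ext x
        simp only [Set.mem_iInter, Set.mem_compl_iff, mem_closedBall, dist_zero_right,
          Set.mem_empty_iff_false, iff_false, not_forall, not_not]
        obtain ⟨m, hm⟩ := exists_nat_ge ‖x‖
        exact ⟨m, by exact_mod_cast hm⟩
      have := tendsto_measure_iInter_atTop (μ := ν)
        (fun m => (measurableSet_closedBall.compl).nullMeasurableSet) hmono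
        ⟨0, ne_top_of_le_ne_top hν_univ (measure_mono (Set.subset_univ _))⟩
      rw [hiInter] at this
      simpa [Function.comp_def] using this
    obtain ⟨m, hm⟩ := (htail.eventually (eventually_lt_nhds hc_pos)).exists
    -- conclude
    rw [eventually_iff, mem_cocompact]
    refine ⟨closedBall (0 : EuclideanSpace ℝ (Fin n)) (m + δ), isCompact_closedBall _ _, ?_⟩
    intro x hx
    simp only [Set.mem_compl_iff, mem_closedBall, dist_zero_right, not_le] at hx
    simp only [Set.mem_setOf_eq, Real.dist_eq, sub_zero]
    rw [abs_of_nonneg (hf0 x)]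
    by_contra hcon
    push_neg at hcon
    have hsub : ball x δ ⊆ (closedBall (0 : EuclideanSpace ℝ (Fin n)) m)ᶜ := by
      intro y hy
      simp only [Set.mem_compl_iff, mem_closedBall, dist_zero_right, not_le]
      rw [mem_ball] at hy
      have : ‖x‖ - ‖y‖ ≤ dist y x := by
        rw [dist_comm, dist_eq_norm]
        calc ‖x‖ - ‖y‖ ≤ |‖x‖ - ‖y‖| := le_abs_self _
          _ ≤ ‖x - y‖ := abs_norm_sub_norm_le _ _
      linarith
    have hle : c ≤ ν (closedBall (0 : EuclideanSpace ℝ (Fin n)) m)ᶜ :=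
      (hlow x hcon).trans (measure_mono hsub)
    exact absurd hle (not_le.2 hm)
  -- deduce the conclusion
  have h3 : Tendsto (fun x => ‖u x‖ ^ 2) (cocompact (EuclideanSpace ℝ (Fin n))) (𝓝 1) := by
    have h := (tendsto_const_nhds (x := (1:ℝ)) (f := cocompact (EuclideanSpace ℝ (Fin n)))).sub h2
    rw [hf] at h
    simpa using h
  have h4 : Tendsto (fun x => Real.sqrt (‖u x‖ ^ 2)) (cocompact (EuclideanSpace ℝ (Fin n))) (𝓝 1) := by
    have := (Real.continuous_sqrt.tendsto 1).comp h3
    simpa [Function.comp_def] using this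
  have heq : (fun x => Real.sqrt (‖u x‖ ^ 2)) = fun x => ‖u x‖ := by
    funext x; rw [Real.sqrt_sq (norm_nonneg _)]
  rwa [heq] at h4
end
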